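/- arXiv:1606.05198 — 4 statements merged into one kernel-verified Lean document; each statement's English description precedes it below -/
import Mathlib

section
/- Let G = (V,E) be a finite simple graph and w a positive integer. Suppose F ⊆ E is a set of edges such that for every subset S ⊆ V there exists a set X^S ⊆ V with |X^S| ≤ w which is a 1/2-separator of S in the graph G − F (the graph obtained from G by deleting the edges in F). Then there exist nonnegative vectors x : E → ℝ, and for every S ⊆ V nonnegative vectors y^S : V → ℝ and symmetric nonnegative d^S : V × V → ℝ, such that: (1) ∑_{e ∈ E} x_e = |F|; (2) for every S ⊆ V, ∑_{v ∈ V} y^S_v ≤ w; (3) for every S ⊆ V, all u,v ∈ V and every path P in G from u to v, d^S(u,v) ≤ ∑_{e ∈ E(P)} x_e + ∑_{t ∈ V(P)} y^S_t, where E(P) and V(P) denote the edges and vertices of P (including its endpoints); and (4) for every U ⊆ S ⊆ V and every u ∈ U, ∑_{v ∈ U} d^S(u,v) ≥ |U| − |S|/2. -/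
/-- `u` and `v` are connected in `H` by a walk all of whose vertices avoid `X`. -/
def ReachAvoiding {V : Type*} (H : SimpleGraph V) (X : Set V) (u v : V) : Prop :=
  ∃ p : H.Walk u v, ∀ t ∈ p.support, t ∉ X

/-- `X` is a 1/2-separator of `S` in `H`: every connected component `C` of the subgraph of `H`
induced on the complement of `X` satisfies `|C ∩ S| ≤ |S|/2`. -/
def IsHalfSeparator {V : Type*} [Fintype V] (H : SimpleGraph V) (S X : Finset V) : Prop :=
  ∀ v : V, v ∉ X →
    ((({u | ReachAvoiding H (↑X) u v} ∩ (↑S : Set V)).ncard : ℝ)) ≤ (S.card : ℝ) / 2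

lemma reachAvoiding_symm {V : Type*} {H : SimpleGraph V} {X : Set V} {u v : V}
    (h : ReachAvoiding H X u v) : ReachAvoiding H X v u := by
  obtain ⟨p, hp⟩ := h
  exact ⟨p.reverse, by simpa using hp⟩

/-- LP (1) of the paper is a relaxation of the Bounded Treewidth Interdiction problem
(Lemma 3.1): if removing the edge set `F` from `G` leaves a graph in which every vertex set
`S` has a 1/2-separator of size at most `w`, then there is a feasible LP solution
`(x, y, d)` of value `|F|`. -/
theorem lp_relaxation_of_interdiction
    {V : Type*} [Fintype V] [DecidableEq V] (G : SimpleGraph V) [DecidableRel G.Adj]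
    (w : ℕ) (hw : 0 < w) (F : Finset (Sym2 V)) (hF : (↑F : Set (Sym2 V)) ⊆ G.edgeSet)
    (hsep : ∀ S : Finset V, ∃ X : Finset V, X.card ≤ w ∧
      IsHalfSeparator (G.deleteEdges (↑F : Set (Sym2 V))) S X) :
    ∃ (x : Sym2 V → ℝ) (y : Finset V → V → ℝ) (d : Finset V → V → V → ℝ),
      (∀ e, 0 ≤ x e) ∧
      (∀ S v, 0 ≤ y S v) ∧
      (∀ S u v, 0 ≤ d S u v) ∧
      (∀ S u v, d S u v = d S v u) ∧
      (∑ e ∈ G.edgeFinset, x e = (F.card : ℝ)) ∧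
      (∀ S : Finset V, ∑ v : V, y S v ≤ (w : ℝ)) ∧
      (∀ (S : Finset V) (u v : V) (p : G.Walk u v), p.IsPath →
        d S u v ≤ (p.edges.map x).sum + (p.support.map (y S)).sum) ∧
      (∀ (S U : Finset V), U ⊆ S → ∀ u ∈ U,
        (U.card : ℝ) - (S.card : ℝ) / 2 ≤ ∑ v ∈ U, d S u v) := by
  classical
  set H := G.deleteEdges (↑F : Set (Sym2 V)) with hH
  choose X hXcard hXsep using hsep
  refine ⟨fun e => if e ∈ F then 1 else 0,
    fun S v => if v ∈ X S then 1 else 0,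
    fun S u v => if ReachAvoiding H (↑(X S)) u v then 0 else 1,
    ?_, ?_, ?_, ?_, ?_, ?_, ?_, ?_⟩
  · intro e; positivity
  · intro S v; positivity
  · intro S u v; positivity
  · intro S u v
    dsimp only
    by_cases h : ReachAvoiding H (↑(X S)) u v
    · rw [if_pos h, if_pos (reachAvoiding_symm h)]
    · rw [if_neg h, if_neg (fun h' => h (reachAvoiding_symm h'))]
  · rw [Finset.sum_boole]
    have hsub : F ⊆ G.edgeFinset := by
      intro e he
      simpa [SimpleGraph.mem_edgeFinset] using hF he
    rw [Finset.filter_mem_eq_inter, Finset.inter_eq_right.2 hsub]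
  · intro S
    rw [Finset.sum_boole]
    have : (Finset.univ.filter (· ∈ X S)) = X S := by
      ext v; simp
    rw [this]
    exact_mod_cast hXcard S
  · intro S u v p _
    dsimp only
    have hx : ∀ a ∈ p.edges.map (fun e => if e ∈ F then (1:ℝ) else 0), 0 ≤ a := by
      intro a ha
      obtain ⟨e, -, rfl⟩ := List.mem_map.1 ha
      positivity
    have hy : ∀ a ∈ p.support.map (fun t => if t ∈ X S then (1:ℝ) else 0), 0 ≤ a := by
      intro a ha
      obtain ⟨t, -, rfl⟩ := List.mem_map.1 ha
      positivity
    by_cases hreach : ReachAvoiding H (↑(X S)) u v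
    · rw [if_pos hreach]
      exact add_nonneg (List.sum_nonneg hx) (List.sum_nonneg hy)
    · rw [if_neg hreach]
      by_cases hedge : ∃ e ∈ p.edges, e ∈ F
      · obtain ⟨e, he, heF⟩ := hedge
        have h1 : (1:ℝ) ≤ (p.edges.map (fun e => if e ∈ F then (1:ℝ) else 0)).sum := by
          have := List.single_le_sum hx (if e ∈ F then (1:ℝ) else 0)
            (List.mem_map_of_mem he)
          rwa [if_pos heF] at this
        linarith [List.sum_nonneg hy]
      · by_cases hvert : ∃ t ∈ p.support, t ∈ X S
        · obtain ⟨t, ht, htX⟩ := hvert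
          have h1 : (1:ℝ) ≤ (p.support.map (fun t => if t ∈ X S then (1:ℝ) else 0)).sum := by
            have := List.single_le_sum hy (if t ∈ X S then (1:ℝ) else 0)
              (List.mem_map_of_mem ht)
            rwa [if_pos htX] at this
          linarith [List.sum_nonneg hx]
        · exfalso
          push_neg at hedge hvert
          have hedges : ∀ e ∈ p.edges, e ∈ H.edgeSet := by
            intro e he
            rw [hH, SimpleGraph.edgeSet_deleteEdges]
            exact ⟨p.edges_subset_edgeSet he, hedge e he⟩
          refine hreach ⟨p.transfer H hedges, ?_⟩
          intro t ht
          rw [SimpleGraph.Walk.support_transfer] at ht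
          exact hvert t ht
  · intro S U hUS u huU
    have hsum : ∑ v ∈ U, (if ReachAvoiding H (↑(X S)) u v then (0:ℝ) else 1)
        = (U.card : ℝ) - ((U.filter (fun v => ReachAvoiding H (↑(X S)) u v)).card : ℝ) := by
      have : ∀ v ∈ U, (if ReachAvoiding H (↑(X S)) u v then (0:ℝ) else 1)
          = 1 - (if ReachAvoiding H (↑(X S)) u v then (1:ℝ) else 0) := by
        intro v _; by_cases h : ReachAvoiding H (↑(X S)) u v <;> simp [h]
      rw [Finset.sum_congr rfl this, Finset.sum_sub_distrib, Finset.sum_const,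
        Finset.sum_boole]
      simp
    rw [hsum]
    by_cases huX : u ∈ X S
    · have : ((U.filter (fun v => ReachAvoiding H (↑(X S)) u v)).card : ℝ) = 0 := by
        norm_cast
        rw [Finset.card_eq_zero, Finset.filter_eq_empty_iff]
        intro v _ ⟨p, hp⟩
        exact hp u p.start_mem_support huX
      rw [this]
      have : (0:ℝ) ≤ (S.card : ℝ) / 2 := by positivity
      linarith
    · have hkey := hXsep S u huX
      have hsub : (↑(U.filter (fun v => ReachAvoiding H (↑(X S)) u v)) : Set V)
          ⊆ {u' | ReachAvoiding H (↑(X S)) u' u} ∩ (↑S : Set V) := by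
        intro v hv
        simp only [Finset.coe_filter, Set.mem_setOf_eq] at hv
        exact ⟨reachAvoiding_symm hv.2, hUS hv.1⟩
      have hle : ((U.filter (fun v => ReachAvoiding H (↑(X S)) u v)).card : ℝ)
          ≤ (S.card : ℝ) / 2 := by
        refine le_trans ?_ hkey
        have := Set.ncard_le_ncard hsub (Set.toFinite _)
        rw [Set.ncard_coe_finset] at this
        exact_mod_cast this
      linarith
end

section
/- Let b > 0 and let f : ℝ → ℝ be nondecreasing with f(r) > 0 for all r ∈ [0,b], and let C > 0. Then the Lebesgue measure of the set A = { r ∈ [0,b] : f is differentiable at r and f'(r) > C · ln(e·f(b)/f(r)) · f(r) } is at most (1/C) · ln ln ( e·f(b)/f(0) ). -/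
open MeasureTheory Real

/-- Measure bound on the set `A_x` of `x`-bad radii in the proof of the Region Growing Lemma
(Lemma 4.3), for an abstract nondecreasing volume function `f`. -/
theorem bad_x_radii_measure_bound (b C : ℝ) (hb : 0 < b) (hC : 0 < C)
    (f : ℝ → ℝ) (hf : Monotone f) (hpos : ∀ r ∈ Set.Icc 0 b, 0 < f r) :
    volume {r ∈ Set.Icc 0 b | DifferentiableAt ℝ f r ∧
        C * Real.log (Real.exp 1 * f b / f r) * f r < deriv f r}
      ≤ ENNReal.ofReal ((1 / C) * Real.log (Real.log (Real.exp 1 * f b / f 0))) := by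
  classical
  set A : Set ℝ := {r ∈ Set.Icc 0 b | DifferentiableAt ℝ f r ∧
      C * Real.log (Real.exp 1 * f b / f r) * f r < deriv f r} with hA
  have hf0 : 0 < f 0 := hpos 0 ⟨le_refl 0, hb.le⟩
  have hfb : 0 < f b := hpos b ⟨hb.le, le_refl b⟩
  -- projection onto [0,b]
  set proj : ℝ → ℝ := fun r => max (min r b) 0 with hprojdef
  have hprojmem : ∀ r, proj r ∈ Set.Icc 0 b := by
    intro r
    exact ⟨le_max_right _ _, max_le (min_le_right _ _) hb.le⟩
  have hprojmono : Monotone proj := fun x y hxy =>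
    max_le_max (min_le_min hxy (le_refl b)) (le_refl 0)
  have hproj_id : ∀ r ∈ Set.Icc 0 b, proj r = r := by
    intro r hr
    simp only [hprojdef]
    rw [min_eq_left hr.2, max_eq_left hr.1]
  have hfproj : ∀ r, 0 < f (proj r) := fun r => hpos _ (hprojmem r)
  have hfle : ∀ r, f (proj r) ≤ f b := fun r => hf (hprojmem r).2
  -- the auxiliary function h
  set h : ℝ → ℝ := fun r => 1 + Real.log (f b) - Real.log (f (proj r)) with hhdef
  have hh1 : ∀ r, 1 ≤ h r := by
    intro r
    have := Real.log_le_log (hfproj r) (hfle r)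
    simp only [hhdef]
    linarith
  have hhpos : ∀ r, 0 < h r := fun r => lt_of_lt_of_le one_pos (hh1 r)
  -- for r ∈ [0,b], h r is the log expression
  have hhlog : ∀ r ∈ Set.Icc 0 b, h r = Real.log (Real.exp 1 * f b / f r) := by
    intro r hr
    have hfr : 0 < f r := hpos r hr
    rw [Real.log_div (by positivity) hfr.ne', Real.log_mul (Real.exp_pos 1).ne' hfb.ne',
      Real.log_exp]
    simp only [hhdef, hproj_id r hr]
  -- the monotone function φ
  set φ : ℝ → ℝ := fun r => - Real.log (h r) with hφdef
  have hφmono : Monotone φ := by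
    intro x y hxy
    have h1 : f (proj x) ≤ f (proj y) := hf (hprojmono hxy)
    have h2 : Real.log (f (proj x)) ≤ Real.log (f (proj y)) :=
      Real.log_le_log (hfproj x) h1
    have h3 : h y ≤ h x := by simp only [hhdef]; linarith
    have h4 : Real.log (h y) ≤ Real.log (h x) := Real.log_le_log (hhpos y) h3
    simp only [hφdef]
    linarith
  -- φ b - φ 0
  have hhb : h b = 1 := by
    simp only [hhdef, hproj_id b ⟨hb.le, le_refl b⟩]; ring
  have hφb : φ b = 0 := by simp [hφdef, hhb]
  have hφ0 : φ 0 = - Real.log (Real.log (Real.exp 1 * f b / f 0)) := by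
    simp only [hφdef, hhlog 0 ⟨le_refl 0, hb.le⟩]
  set M : ℝ := Real.log (Real.log (Real.exp 1 * f b / f 0)) with hM
  -- the derivative bound on A ∩ Ioo 0 b
  have hkey : ∀ r ∈ A ∩ Set.Ioo 0 b, HasDerivAt φ (deriv f r / f r / h r) r ∧
      C < deriv f r / f r / h r := by
    rintro r ⟨⟨hrIcc, hdiff, hineq⟩, hrIoo⟩
    have hfr : 0 < f r := hpos r hrIcc
    have hhr : h r = Real.log (Real.exp 1 * f b / f r) := hhlog r hrIcc
    have hhrpos : 0 < h r := hhpos r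
    -- local form of φ
    have heq : φ =ᶠ[nhds r] fun x => - Real.log (1 + Real.log (f b) - Real.log (f x)) := by
      filter_upwards [Ioo_mem_nhds hrIoo.1 hrIoo.2] with x hx
      simp only [hφdef, hhdef, hproj_id x ⟨hx.1.le, hx.2.le⟩]
    have hlog : HasDerivAt (fun x => Real.log (f x)) (deriv f r / f r) r :=
      (hdiff.hasDerivAt).log hfr.ne'
    have hu : HasDerivAt (fun x => 1 + Real.log (f b) - Real.log (f x))
        (0 - deriv f r / f r) r :=
      (hasDerivAt_const r (1 + Real.log (f b))).sub hlog
    have hur : (1 + Real.log (f b) - Real.log (f r)) = h r := by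
      simp only [hhdef, hproj_id r hrIcc]
    have hune : (1 + Real.log (f b) - Real.log (f r)) ≠ 0 := by rw [hur]; exact hhrpos.ne'
    have hlogu : HasDerivAt (fun x => Real.log (1 + Real.log (f b) - Real.log (f x)))
        ((0 - deriv f r / f r) / (1 + Real.log (f b) - Real.log (f r))) r := hu.log hune
    have hψ : HasDerivAt (fun x => - Real.log (1 + Real.log (f b) - Real.log (f x)))
        (-((0 - deriv f r / f r) / (1 + Real.log (f b) - Real.log (f r)))) r := hlogu.neg
    have hφderiv : HasDerivAt φ (deriv f r / f r / h r) r := by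
      have := hψ.congr_of_eventuallyEq heq
      exact this.congr_deriv (by rw [hur]; ring)
    refine ⟨hφderiv, ?_⟩
    rw [← hhr] at hineq
    rw [div_div, lt_div_iff₀ (by positivity)]
    nlinarith
  -- A is measurable
  have hAmeas : MeasurableSet A := by
    have h1 : MeasurableSet {r : ℝ | DifferentiableAt ℝ f r} :=
      measurableSet_of_differentiableAt ℝ f
    have h2 : Measurable (deriv f) := measurable_deriv f
    have h3 : Measurable fun r => C * Real.log (Real.exp 1 * f b / f r) * f r := by
      have hfm : Measurable f := hf.measurable
      exact ((measurable_const.mul (Real.measurable_log.comp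
        (measurable_const.div hfm))).mul hfm)
    have : A = Set.Icc 0 b ∩ ({r | DifferentiableAt ℝ f r} ∩
        {r | C * Real.log (Real.exp 1 * f b / f r) * f r < deriv f r}) := by
      ext r; simp [hA, and_assoc]
    rw [this]
    exact measurableSet_Icc.inter (h1.inter (measurableSet_lt h3 h2))
  set A' : Set ℝ := A ∩ Set.Ioo 0 b with hA'
  have hA'meas : MeasurableSet A' := hAmeas.inter measurableSet_Ioo
  -- Stieltjes measure
  set μ := hφmono.stieltjesFunction.measure with hμ
  set d : ℝ → ENNReal := fun x => Measure.rnDeriv μ volume x with hd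
  have hae : ∀ᵐ x ∂volume, x ∈ A' → ENNReal.ofReal C ≤ d x := by
    filter_upwards [hφmono.ae_hasDerivAt] with x hx hmem
    obtain ⟨hder, hCd⟩ := hkey x hmem
    have huniq : (d x).toReal = deriv f x / f x / h x := hx.unique hder
    calc ENNReal.ofReal C ≤ ENNReal.ofReal ((d x).toReal) := by
          apply ENNReal.ofReal_le_ofReal; rw [huniq]; exact hCd.le
      _ ≤ d x := ENNReal.ofReal_toReal_le
  -- main measure estimate
  have hmain : ENNReal.ofReal C * volume A' ≤ ENNReal.ofReal M := by
    calc ENNReal.ofReal C * volume A'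
        = ∫⁻ _ in A', ENNReal.ofReal C ∂volume := (setLIntegral_const A' _).symm
      _ ≤ ∫⁻ x in A', d x ∂volume := by
          refine lintegral_mono_ae ?_
          exact (ae_restrict_iff' hA'meas).mpr hae
      _ ≤ μ A' := Measure.setLIntegral_rnDeriv_le A'
      _ ≤ μ (Set.Ioc 0 b) := by
          apply measure_mono
          exact fun x hx => ⟨hx.2.1, hx.2.2.le⟩
      _ = ENNReal.ofReal (hφmono.stieltjesFunction b - hφmono.stieltjesFunction 0) :=
          hφmono.stieltjesFunction.measure_Ioc 0 b
      _ ≤ ENNReal.ofReal M := by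
          apply ENNReal.ofReal_le_ofReal
          have h1 : hφmono.stieltjesFunction b ≤ φ (b + 1) := by
            have : Function.rightLim φ b ≤ φ (b + 1) :=
              hφmono.rightLim_le (by linarith)
            simpa [Monotone.stieltjesFunction_eq] using this
          have h2 : φ 0 ≤ hφmono.stieltjesFunction 0 := by
            have : φ 0 ≤ Function.rightLim φ 0 := hφmono.le_rightLim (le_refl 0)
            simpa [Monotone.stieltjesFunction_eq] using this
          have h3 : φ (b + 1) = φ b := by
            have : proj (b + 1) = b := by
              simp only [hprojdef]
              rw [min_eq_right (by linarith), max_eq_left hb.le]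
            simp only [hφdef, hhdef, this, hproj_id b ⟨hb.le, le_refl b⟩]
          have := hφ0
          rw [hφb] at h3
          linarith [hφ0 ▸ h2]
  -- volume A ≤ volume A'
  have hvol : volume A ≤ volume A' := by
    have hsub : A ⊆ A' ∪ {0, b} := by
      intro x hx
      rcases eq_or_ne x 0 with rfl | h0
      · exact Or.inr (Or.inl rfl)
      rcases eq_or_ne x b with rfl | hbx
      · exact Or.inr (Or.inr rfl)
      · exact Or.inl ⟨hx, lt_of_le_of_ne hx.1.1 (Ne.symm h0),
          lt_of_le_of_ne hx.1.2 hbx⟩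
    calc volume A ≤ volume (A' ∪ {0, b}) := measure_mono hsub
      _ ≤ volume A' + volume ({0, b} : Set ℝ) := measure_union_le _ _
      _ = volume A' := by
          rw [show ({0, b} : Set ℝ) = {0} ∪ {b} by rfl]
          have : volume ({0} ∪ {b} : Set ℝ) = 0 := by
            apply measure_union_null <;> simp
          rw [this, add_zero]
  -- conclude
  have hCne : ENNReal.ofReal C ≠ 0 := by simp [ENNReal.ofReal_eq_zero, not_le, hC]
  have hCnetop : ENNReal.ofReal C ≠ ⊤ := ENNReal.ofReal_ne_top
  have : ENNReal.ofReal C * volume A ≤ ENNReal.ofReal M :=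
    le_trans (mul_le_mul_right hvol _) hmain
  rw [show (1 / C) * M = M / C by ring, ENNReal.ofReal_div_of_pos hC]
  rw [ENNReal.le_div_iff_mul_le (Or.inl hCne) (Or.inl hCnetop), mul_comm]
  exact this
end

section
/- Let b > 0 and let f : ℝ → ℝ be nondecreasing with f(r) > 0 for all r ∈ [0,b], and let C > 0. Then the Lebesgue measure of the set A = { r ∈ [0,b] : f is differentiable at r and f'(r) > C · f(r) } is at most (1/C) · ln ( f(b)/f(0) ). -/
open MeasureTheory Real Topology Filter

/-- Measure bound on the set `A_y` of `y`-bad radii in the proof of the Region Growing Lemma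
(Lemma 4.3), for an abstract nondecreasing volume function `f`. -/
theorem bad_y_radii_measure_bound (b C : ℝ) (hb : 0 < b) (hC : 0 < C)
    (f : ℝ → ℝ) (hf : Monotone f) (hpos : ∀ r ∈ Set.Icc 0 b, 0 < f r) :
    volume {r ∈ Set.Icc 0 b | DifferentiableAt ℝ f r ∧ C * f r < deriv f r}
      ≤ ENNReal.ofReal ((1 / C) * Real.log (f b / f 0)) := by
  have hf0 : 0 < f 0 := hpos 0 ⟨le_rfl, hb.le⟩
  have hfb : 0 < f b := hpos b ⟨hb.le, le_rfl⟩
  -- clamped function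
  set c : ℝ → ℝ := fun x => min b (max 0 x) with hc
  have hcmono : Monotone c := fun x y hxy => by
    dsimp [c]; exact min_le_min le_rfl (max_le_max le_rfl hxy)
  have hcrange : ∀ x, c x ∈ Set.Icc (0:ℝ) b := fun x =>
    ⟨le_min hb.le (le_max_left _ _), min_le_left _ _⟩
  set g : ℝ → ℝ := fun x => Real.log (f (c x)) with hgdef
  have hg : Monotone g := fun x y hxy =>
    Real.log_le_log (hpos _ (hcrange x)) (hf (hcmono hxy))
  have hgeq : ∀ x ∈ Set.Ioo (0:ℝ) b, g x = Real.log (f x) := by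
    intro x hx
    have : c x = x := by
      dsimp [c]; rw [max_eq_right hx.1.le, min_eq_right hx.2.le]
    rw [hgdef]; simp only [this]
  set ν := hg.stieltjesFunction.measure with hν
  have hS : ∀ᵐ x, HasDerivAt g ((ν.rnDeriv volume x).toReal) x := hg.ae_hasDerivAt
  set S : Set ℝ := {r ∈ Set.Icc 0 b | DifferentiableAt ℝ f r ∧ C * f r < deriv f r} ∩
    Set.Ioo 0 b with hSdef
  have hSkey : ∀ᵐ x ∂(volume.restrict S), ENNReal.ofReal C ≤ ν.rnDeriv volume x := by
    rw [ae_restrict_iff' (by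
      apply MeasurableSet.inter _ measurableSet_Ioo
      apply MeasurableSet.inter measurableSet_Icc
      exact (measurableSet_of_differentiableAt ℝ f).inter
        (measurableSet_lt ((hf.measurable).const_mul C) (measurable_deriv f)))]
    filter_upwards [hS] with x hx hxS
    obtain ⟨⟨_, hdiff, hlt⟩, hxIoo⟩ := hxS
    have hfx : 0 < f x := hpos x ⟨hxIoo.1.le, hxIoo.2.le⟩
    -- g = log ∘ f near x
    have hev : (fun y => Real.log (f y)) =ᶠ[nhds x] g := by
      filter_upwards [Ioo_mem_nhds hxIoo.1 hxIoo.2] with y hy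
      exact (hgeq y hy).symm
    have hlog : HasDerivAt (fun y => Real.log (f y)) (deriv f x / f x) x :=
      (hdiff.hasDerivAt).log hfx.ne'
    have hgx : HasDerivAt g (deriv f x / f x) x := hlog.congr_of_eventuallyEq hev.symm
    have heq : (ν.rnDeriv volume x).toReal = deriv f x / f x := hx.unique hgx
    have hCgt : C < (ν.rnDeriv volume x).toReal := by
      rw [heq, lt_div_iff₀ hfx]; exact hlt
    by_cases htop : ν.rnDeriv volume x = ⊤
    · simp [htop]
    · exact ENNReal.ofReal_le_of_le_toReal hCgt.le
  -- the lintegral chain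
  have hchain : ENNReal.ofReal C * volume S ≤ ν (Set.Ioc (-1) (b+1)) := by
    calc ENNReal.ofReal C * volume S = ∫⁻ _ in S, ENNReal.ofReal C ∂volume := by
          rw [setLIntegral_const]
      _ ≤ ∫⁻ x in S, ν.rnDeriv volume x ∂volume := lintegral_mono_ae hSkey
      _ ≤ ∫⁻ x in Set.Ioc (-1) (b+1), ν.rnDeriv volume x ∂volume := by
          apply lintegral_mono_set
          intro x hx
          exact ⟨by linarith [hx.2.1], by linarith [hx.2.2]⟩
      _ ≤ ν (Set.Ioc (-1) (b+1)) := Measure.setLIntegral_rnDeriv_le _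
  -- compute the Stieltjes measure bound
  have hgconst_top : ∀ y, b ≤ y → g y = Real.log (f b) := by
    intro y hy
    have : c y = b := by
      dsimp [c]; rw [min_eq_left]; exact le_trans hy (le_max_right _ _)
    rw [hgdef]; simp only [this]
  have hgconst_bot : ∀ y, y ≤ 0 → g y = Real.log (f 0) := by
    intro y hy
    have : c y = 0 := by
      dsimp [c]; rw [max_eq_left hy, min_eq_right hb.le]
    rw [hgdef]; simp only [this]
  have hst_top : hg.stieltjesFunction (b+1) = Real.log (f b) := by
    rw [hg.stieltjesFunction_eq]
    apply rightLim_eq_of_tendsto (h := nhdsGT_neBot (b+1))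
    apply Filter.Tendsto.congr' _ tendsto_const_nhds
    filter_upwards [self_mem_nhdsWithin] with y hy
    exact (hgconst_top y (by linarith [Set.mem_Ioi.mp hy])).symm
  have hst_bot : hg.stieltjesFunction (-1) = Real.log (f 0) := by
    rw [hg.stieltjesFunction_eq]
    apply rightLim_eq_of_tendsto (h := nhdsGT_neBot (-1:ℝ))
    apply Filter.Tendsto.congr'
      (f₁ := fun _ => Real.log (f 0)) _ tendsto_const_nhds
    filter_upwards [Ioo_mem_nhdsGT_of_mem (by norm_num : (-1:ℝ) ∈ Set.Ico (-1) 0)]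
      with y hy
    exact (hgconst_bot y hy.2.le).symm
  have hν_bound : ν (Set.Ioc (-1) (b+1)) = ENNReal.ofReal (Real.log (f b) - Real.log (f 0)) := by
    rw [hν, StieltjesFunction.measure_Ioc, hst_top, hst_bot]
  -- combine
  have hlogdiv : Real.log (f b / f 0) = Real.log (f b) - Real.log (f 0) :=
    Real.log_div hfb.ne' hf0.ne'
  have hvolS : volume S ≤ ENNReal.ofReal ((1/C) * Real.log (f b / f 0)) := by
    rw [hlogdiv, one_div_mul_eq_div, ENNReal.ofReal_div_of_pos hC,
      ENNReal.le_div_iff_mul_le (Or.inl (by simp [ENNReal.ofReal_eq_zero, hC.not_ge]))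
        (Or.inl ENNReal.ofReal_ne_top), mul_comm]
    rw [hν_bound] at hchain
    exact hchain
  refine le_trans ?_ hvolS
  have hsub : {r ∈ Set.Icc 0 b | DifferentiableAt ℝ f r ∧ C * f r < deriv f r} ⊆
      S ∪ {0, b} := by
    intro x hx
    rcases eq_or_ne x 0 with h0 | h0
    · exact Or.inr (Or.inl h0)
    rcases eq_or_ne x b with hb' | hb'
    · exact Or.inr (Or.inr hb')
    exact Or.inl ⟨hx, lt_of_le_of_ne hx.1.1 (Ne.symm h0), lt_of_le_of_ne hx.1.2 hb'⟩
  calc volume {r ∈ Set.Icc 0 b | DifferentiableAt ℝ f r ∧ C * f r < deriv f r}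
      ≤ volume (S ∪ {0, b}) := measure_mono hsub
    _ ≤ volume S + volume ({0, b} : Set ℝ) := measure_union_le _ _
    _ = volume S := by
        rw [show volume ({0, b} : Set ℝ) = 0 from
          measure_union_null (measure_singleton 0) (measure_singleton b), add_zero]
end

section
/- Let f, g : ℝ → ℝ be nondecreasing functions with f(r) > 0 and g(r) > 0 for all r ∈ [0, 1/12]. Let L > 0 and K > 0 be real numbers with ln ln ( e·f(1/12)/f(0) ) ≤ L and ln ( g(1/12)/g(0) ) ≤ K. Then there exists r ∈ [0, 1/12] such that both f and g are differentiable at r and simultaneously f'(r) ≤ 48 · L · ln( e·f(1/12)/f(r) ) · f(r) and g'(r) ≤ 48 · K · g(r). -/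
open Real MeasureTheory

open MeasureTheory in
private lemma meas_bad_le {ψ : ℝ → ℝ} (hψ : Monotone ψ) {a b c : ℝ}
    (hc : 0 < c) (hb : Function.rightLim ψ b ≤ ψ b) :
    volume {r | r ∈ Set.Ioo a b ∧
        c < (hψ.stieltjesFunction.measure.rnDeriv volume r).toReal}
      ≤ ENNReal.ofReal ((ψ b - ψ a) / c) := by
  set μ := hψ.stieltjesFunction.measure with hμ
  set ρ := μ.rnDeriv volume with hρ
  have hmeas : Measurable ρ := Measure.measurable_rnDeriv _ _
  have hmset : MeasurableSet {x | ENNReal.ofReal c ≤ ρ x} :=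
    measurableSet_le measurable_const hmeas
  have hsub : {r | r ∈ Set.Ioo a b ∧ c < (ρ r).toReal}
      ⊆ {x | ENNReal.ofReal c ≤ ρ x} ∩ Set.Ioo a b := by
    rintro r ⟨hr, hcr⟩
    refine ⟨?_, hr⟩
    by_cases htop : ρ r = ⊤
    · simp [Set.mem_setOf_eq, htop]
    · have h := ENNReal.ofReal_le_ofReal hcr.le
      rwa [ENNReal.ofReal_toReal htop] at h
  have markov := mul_meas_ge_le_lintegral₀ (μ := volume.restrict (Set.Ioo a b))
      hmeas.aemeasurable (ENNReal.ofReal c)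
  have hres : (volume.restrict (Set.Ioo a b)) {x | ENNReal.ofReal c ≤ ρ x}
      = volume ({x | ENNReal.ofReal c ≤ ρ x} ∩ Set.Ioo a b) :=
    Measure.restrict_apply hmset
  have hint : ∫⁻ x in Set.Ioo a b, ρ x ∂volume ≤ μ (Set.Ioo a b) :=
    Measure.setLIntegral_rnDeriv_le _
  have hμIoo : μ (Set.Ioo a b) ≤ ENNReal.ofReal (ψ b - ψ a) := by
    rw [hμ, StieltjesFunction.measure_Ioo]
    apply ENNReal.ofReal_le_ofReal
    have h1 : Function.leftLim (hψ.stieltjesFunction) b ≤ ψ b := by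
      refine le_trans ?_ hb
      have h := (hψ.stieltjesFunction.mono).leftLim_le (le_refl b)
      rwa [hψ.stieltjesFunction_eq] at h
    have h2 : ψ a ≤ hψ.stieltjesFunction a := by
      rw [hψ.stieltjesFunction_eq]; exact hψ.le_rightLim le_rfl
    linarith
  have key : ENNReal.ofReal c * volume {r | r ∈ Set.Ioo a b ∧ c < (ρ r).toReal}
      ≤ ENNReal.ofReal (ψ b - ψ a) := by
    calc ENNReal.ofReal c * volume {r | r ∈ Set.Ioo a b ∧ c < (ρ r).toReal}
        ≤ ENNReal.ofReal c *
          (volume.restrict (Set.Ioo a b)) {x | ENNReal.ofReal c ≤ ρ x} :=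
          mul_le_mul_right (by rw [hres]; exact measure_mono hsub) _
      _ ≤ ∫⁻ x in Set.Ioo a b, ρ x ∂volume := markov
      _ ≤ μ (Set.Ioo a b) := hint
      _ ≤ _ := hμIoo
  rw [ENNReal.ofReal_div_of_pos hc]
  rw [ENNReal.le_div_iff_mul_le (Or.inl (by simpa using hc)) (Or.inl ENNReal.ofReal_ne_top)]
  rwa [mul_comm] at key

private lemma hasDerivAt_U {M t : ℝ} (ht : 0 < t) (hMt : 0 < M - Real.log t) :
    HasDerivAt (fun s => -Real.log (M - Real.log s)) (1 / ((M - Real.log t) * t)) t := by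
  have h1 : HasDerivAt Real.log t⁻¹ t := Real.hasDerivAt_log ht.ne'
  have h2 : HasDerivAt (fun s => M - Real.log s) (-t⁻¹) t := by
    have := (hasDerivAt_const t M).sub h1; rw [zero_sub] at this; exact this
  have h3 : HasDerivAt Real.log (M - Real.log t)⁻¹ (M - Real.log t) :=
    Real.hasDerivAt_log hMt.ne'
  have h4 := (h3.comp t h2).neg
  convert (show HasDerivAt (fun s => -Real.log (M - Real.log s)) _ t from h4) using 1
  field_simp

/-- Abstract core of the Region Growing Lemma (Lemma 4.3): there is a radius
`r ∈ [0, 1/12]` that is simultaneously `x`-good and `y`-good. -/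
theorem exists_good_radius (f g : ℝ → ℝ) (hf : Monotone f) (hg : Monotone g)
    (hfpos : ∀ r ∈ Set.Icc (0 : ℝ) (1 / 12), 0 < f r)
    (hgpos : ∀ r ∈ Set.Icc (0 : ℝ) (1 / 12), 0 < g r)
    (L K : ℝ) (hL : 0 < L) (hK : 0 < K)
    (hfL : Real.log (Real.log (Real.exp 1 * f (1 / 12) / f 0)) ≤ L)
    (hgK : Real.log (g (1 / 12) / g 0) ≤ K) :
    ∃ r ∈ Set.Icc (0 : ℝ) (1 / 12), DifferentiableAt ℝ f r ∧ DifferentiableAt ℝ g r ∧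
      deriv f r ≤ 48 * L * Real.log (Real.exp 1 * f (1 / 12) / f r) * f r ∧
      deriv g r ≤ 48 * K * g r := by
  classical
  have hf0 : 0 < f 0 := hfpos 0 ⟨le_rfl, by norm_num⟩
  have hf1 : 0 < f (1 / 12) := hfpos _ ⟨by norm_num, le_rfl⟩
  have hg0 : 0 < g 0 := hgpos 0 ⟨le_rfl, by norm_num⟩
  have hg1 : 0 < g (1 / 12) := hgpos _ ⟨by norm_num, le_rfl⟩
  set M : ℝ := 1 + Real.log (f (1 / 12)) with hM
  set F : ℝ → ℝ := fun r => max (f 0) (min (f r) (f (1 / 12))) with hFdef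
  set G : ℝ → ℝ := fun r => max (g 0) (min (g r) (g (1 / 12))) with hGdef
  have hf01 : f 0 ≤ f (1 / 12) := hf (by norm_num)
  have hg01 : g 0 ≤ g (1 / 12) := hg (by norm_num)
  have hFmono : Monotone F := fun x y hxy =>
    max_le_max le_rfl (min_le_min (hf hxy) le_rfl)
  have hGmono : Monotone G := fun x y hxy =>
    max_le_max le_rfl (min_le_min (hg hxy) le_rfl)
  have hFmem : ∀ r, f 0 ≤ F r ∧ F r ≤ f (1 / 12) := fun r =>
    ⟨le_max_left _ _, max_le hf01 (min_le_right _ _)⟩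
  have hGmem : ∀ r, g 0 ≤ G r ∧ G r ≤ g (1 / 12) := fun r =>
    ⟨le_max_left _ _, max_le hg01 (min_le_right _ _)⟩
  have hFpos : ∀ r, 0 < F r := fun r => lt_of_lt_of_le hf0 (hFmem r).1
  have hGpos : ∀ r, 0 < G r := fun r => lt_of_lt_of_le hg0 (hGmem r).1
  have hFeq : ∀ r ∈ Set.Icc (0 : ℝ) (1 / 12), F r = f r := by
    intro r hr
    simp only [hFdef, min_eq_left (hf hr.2), max_eq_right (hf hr.1)]
  have hGeq : ∀ r ∈ Set.Icc (0 : ℝ) (1 / 12), G r = g r := by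
    intro r hr
    simp only [hGdef, min_eq_left (hg hr.2), max_eq_right (hg hr.1)]
  have hFconst : ∀ r, 1 / 12 ≤ r → F r = f (1 / 12) := by
    intro r hr
    simp only [hFdef, min_eq_right (hf hr), max_eq_right hf01]
  have hGconst : ∀ r, 1 / 12 ≤ r → G r = g (1 / 12) := by
    intro r hr
    simp only [hGdef, min_eq_right (hg hr), max_eq_right hg01]
  have hMF : ∀ r, 1 ≤ M - Real.log (F r) := by
    intro r
    have := Real.log_le_log (hFpos r) (hFmem r).2
    simp only [hM]; linarith
  -- the two auxiliary monotone functions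
  set ψf : ℝ → ℝ := fun r => -Real.log (M - Real.log (F r)) with hψfdef
  set ψg : ℝ → ℝ := fun r => Real.log (G r) with hψgdef
  have hψf : Monotone ψf := by
    intro x y hxy
    have h1 : Real.log (F x) ≤ Real.log (F y) := Real.log_le_log (hFpos x) (hFmono hxy)
    have h2 : Real.log (M - Real.log (F y)) ≤ Real.log (M - Real.log (F x)) :=
      Real.log_le_log (by linarith [hMF y]) (by linarith)
    simp only [hψfdef]; linarith
  have hψg : Monotone ψg := fun x y hxy =>
    Real.log_le_log (hGpos x) (hGmono hxy)
  -- values at the endpoints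
  have hlogE : Real.log (Real.exp 1 * f (1 / 12) / f 0) = M - Real.log (f 0) := by
    rw [Real.log_div (mul_ne_zero (Real.exp_ne_zero 1) hf1.ne') hf0.ne',
      Real.log_mul (Real.exp_ne_zero 1) hf1.ne', Real.log_exp, hM]
  have hψf1 : ψf (1 / 12) = 0 := by
    simp only [hψfdef, hFeq (1 / 12) ⟨by norm_num, le_rfl⟩, hM]
    norm_num
  have hψf0 : ψf (1 / 12) - ψf 0 ≤ L := by
    rw [hψf1]
    simp only [hψfdef, hFeq 0 ⟨le_rfl, by norm_num⟩]
    rw [← hlogE]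
    linarith [hfL]
  have hψg0 : ψg (1 / 12) - ψg 0 ≤ K := by
    simp only [hψgdef, hGeq 0 ⟨le_rfl, by norm_num⟩,
      hGeq (1 / 12) ⟨by norm_num, le_rfl⟩]
    rw [Real.log_div hg1.ne' hg0.ne'] at hgK
    linarith
  have hψfr : Function.rightLim ψf (1 / 12) ≤ ψf (1 / 12) := by
    have h := hψf.rightLim_le (show (1 / 12 : ℝ) < 1 / 6 by norm_num)
    have : ψf (1 / 6) = ψf (1 / 12) := by
      simp only [hψfdef, hFconst (1 / 6) (by norm_num),
        hFeq (1 / 12) ⟨by norm_num, le_rfl⟩]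
    linarith
  have hψgr : Function.rightLim ψg (1 / 12) ≤ ψg (1 / 12) := by
    have h := hψg.rightLim_le (show (1 / 12 : ℝ) < 1 / 6 by norm_num)
    have : ψg (1 / 6) = ψg (1 / 12) := by
      simp only [hψgdef, hGconst (1 / 6) (by norm_num),
        hGeq (1 / 12) ⟨by norm_num, le_rfl⟩]
    linarith
  -- measures of the bad sets
  set df : ℝ → ℝ := fun r => (hψf.stieltjesFunction.measure.rnDeriv volume r).toReal
  set dg : ℝ → ℝ := fun r => (hψg.stieltjesFunction.measure.rnDeriv volume r).toReal
  have hSf : volume {r | r ∈ Set.Ioo (0 : ℝ) (1 / 12) ∧ 48 * L < df r}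
      ≤ ENNReal.ofReal (1 / 48) := by
    refine le_trans (meas_bad_le hψf (by positivity) hψfr) ?_
    apply ENNReal.ofReal_le_ofReal
    rw [div_le_iff₀ (by positivity)]
    nlinarith [hψf0]
  have hSg : volume {r | r ∈ Set.Ioo (0 : ℝ) (1 / 12) ∧ 48 * K < dg r}
      ≤ ENNReal.ofReal (1 / 48) := by
    refine le_trans (meas_bad_le hψg (by positivity) hψgr) ?_
    apply ENNReal.ofReal_le_ofReal
    rw [div_le_iff₀ (by positivity)]
    nlinarith [hψg0]
  -- almost everywhere derivative statements
  set ef : ℝ → ℝ := fun r => (hf.stieltjesFunction.measure.rnDeriv volume r).toReal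
  set eg : ℝ → ℝ := fun r => (hg.stieltjesFunction.measure.rnDeriv volume r).toReal
  have hNf : volume {r | ¬ HasDerivAt f (ef r) r} = 0 := hf.ae_hasDerivAt
  have hNg : volume {r | ¬ HasDerivAt g (eg r) r} = 0 := hg.ae_hasDerivAt
  have hNψf : volume {r | ¬ HasDerivAt ψf (df r) r} = 0 := hψf.ae_hasDerivAt
  have hNψg : volume {r | ¬ HasDerivAt ψg (dg r) r} = 0 := hψg.ae_hasDerivAt
  -- find a good point
  set T : Set ℝ := {r | r ∈ Set.Ioo (0 : ℝ) (1 / 12) ∧ 48 * L < df r} ∪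
      {r | r ∈ Set.Ioo (0 : ℝ) (1 / 12) ∧ 48 * K < dg r} ∪
      {r | ¬ HasDerivAt f (ef r) r} ∪ {r | ¬ HasDerivAt g (eg r) r} ∪
      {r | ¬ HasDerivAt ψf (df r) r} ∪ {r | ¬ HasDerivAt ψg (dg r) r} with hT
  have hTmeas : volume T ≤ ENNReal.ofReal (1 / 24) := by
    calc volume T ≤ volume ({r | r ∈ Set.Ioo (0 : ℝ) (1 / 12) ∧ 48 * L < df r}) +
        volume ({r | r ∈ Set.Ioo (0 : ℝ) (1 / 12) ∧ 48 * K < dg r}) +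
        volume {r | ¬ HasDerivAt f (ef r) r} + volume {r | ¬ HasDerivAt g (eg r) r} +
        volume {r | ¬ HasDerivAt ψf (df r) r} + volume {r | ¬ HasDerivAt ψg (dg r) r} := by
          rw [hT]
          refine le_trans (measure_union_le _ _) ?_
          gcongr
          refine le_trans (measure_union_le _ _) ?_
          gcongr
          refine le_trans (measure_union_le _ _) ?_
          gcongr
          refine le_trans (measure_union_le _ _) ?_
          gcongr
          exact measure_union_le _ _
      _ ≤ ENNReal.ofReal (1 / 48) + ENNReal.ofReal (1 / 48) + 0 + 0 + 0 + 0 := by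
          gcongr <;> simp [hSf, hSg, hNf, hNg, hNψf, hNψg, le_rfl]
      _ = ENNReal.ofReal (1 / 24) := by
          rw [← ENNReal.ofReal_add (by norm_num) (by norm_num)]
          norm_num
  have hne : volume (Set.Ioo (0 : ℝ) (1 / 12) \ T) ≠ 0 := by
    intro h0
    have h1 : volume (Set.Ioo (0 : ℝ) (1 / 12)) ≤
        volume (Set.Ioo (0 : ℝ) (1 / 12) \ T) + volume T := by
      refine le_trans (measure_mono ?_) (measure_union_le _ _)
      intro x hx
      by_cases hxT : x ∈ T
      · exact Or.inr hxT
      · exact Or.inl ⟨hx, hxT⟩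
    rw [h0, zero_add, Real.volume_Ioo] at h1
    have h2 := le_trans h1 hTmeas
    rw [ENNReal.ofReal_le_ofReal_iff (by norm_num)] at h2
    norm_num at h2
  obtain ⟨r, hrT⟩ := nonempty_of_measure_ne_zero hne
  obtain ⟨hrIoo, hrnT⟩ := hrT
  simp only [hT, Set.mem_union, not_or, Set.mem_setOf_eq, not_and, not_lt, not_not] at hrnT
  obtain ⟨⟨⟨⟨⟨hdfle, hdgle⟩, hdf⟩, hdg⟩, hdψf⟩, hdψg⟩ := hrnT
  have hdfle := hdfle hrIoo
  have hdgle := hdgle hrIoo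
  have hrIcc : r ∈ Set.Icc (0 : ℝ) (1 / 12) := ⟨hrIoo.1.le, hrIoo.2.le⟩
  have hfr : 0 < f r := hfpos r hrIcc
  have hgr : 0 < g r := hgpos r hrIcc
  have hMfr : 1 ≤ M - Real.log (f r) := by
    have := hMF r; rwa [hFeq r hrIcc] at this
  -- chain rule for ψf
  have hUf : HasDerivAt (fun s => -Real.log (M - Real.log s))
      (1 / ((M - Real.log (f r)) * (f r))) (f r) :=
    hasDerivAt_U hfr (by linarith)
  have hcompf : HasDerivAt (fun x => -Real.log (M - Real.log (f x)))
      (1 / ((M - Real.log (f r)) * (f r)) * ef r) r := hUf.comp r hdf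
  have heqf : ψf =ᶠ[nhds r] fun x => -Real.log (M - Real.log (f x)) := by
    filter_upwards [Ioo_mem_nhds hrIoo.1 hrIoo.2] with x hx
    simp only [hψfdef, hFeq x ⟨hx.1.le, hx.2.le⟩]
  have hψfd : HasDerivAt ψf (1 / ((M - Real.log (f r)) * (f r)) * ef r) r :=
    hcompf.congr_of_eventuallyEq heqf
  have hdfeq : df r = 1 / ((M - Real.log (f r)) * (f r)) * ef r := hdψf.unique hψfd
  -- chain rule for ψg
  have hUg : HasDerivAt Real.log (g r)⁻¹ (g r) := Real.hasDerivAt_log hgr.ne'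
  have hcompg : HasDerivAt (fun x => Real.log (g x)) ((g r)⁻¹ * eg r) r := hUg.comp r hdg
  have heqg : ψg =ᶠ[nhds r] fun x => Real.log (g x) := by
    filter_upwards [Ioo_mem_nhds hrIoo.1 hrIoo.2] with x hx
    simp only [hψgdef, hGeq x ⟨hx.1.le, hx.2.le⟩]
  have hψgd : HasDerivAt ψg ((g r)⁻¹ * eg r) r := hcompg.congr_of_eventuallyEq heqg
  have hdgeq : dg r = (g r)⁻¹ * eg r := hdψg.unique hψgd
  -- finish
  refine ⟨r, hrIcc, hdf.differentiableAt, hdg.differentiableAt, ?_, ?_⟩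
  · rw [hdf.deriv]
    have hX : 0 < (M - Real.log (f r)) * f r := by positivity
    have hef : ef r = df r * ((M - Real.log (f r)) * f r) := by
      rw [hdfeq]; field_simp
    have hlog : Real.log (Real.exp 1 * f (1 / 12) / f r) = M - Real.log (f r) := by
      rw [Real.log_div (mul_ne_zero (Real.exp_ne_zero 1) hf1.ne') hfr.ne',
        Real.log_mul (Real.exp_ne_zero 1) hf1.ne', Real.log_exp, hM]
    rw [hef, hlog]
    calc df r * ((M - Real.log (f r)) * f r)
        ≤ (48 * L) * ((M - Real.log (f r)) * f r) :=
          mul_le_mul_of_nonneg_right hdfle hX.le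
      _ = 48 * L * (M - Real.log (f r)) * f r := by ring
  · rw [hdg.deriv]
    have heg : eg r = dg r * g r := by rw [hdgeq]; field_simp
    rw [heg]
    calc dg r * g r ≤ (48 * K) * g r := mul_le_mul_of_nonneg_right hdgle hgr.le
      _ = 48 * K * g r := by ring
end
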